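/- arXiv:2509.12163 — 4 statements merged into one kernel-verified Lean document; each statement's English description precedes it below -/
import Mathlib

section
/- Let R : C → D be a functor admitting a fully faithful left adjoint L : D → C, and let S be the class of morphisms of C sent to isomorphisms by R. Then S admits a calculus of right fractions, and the induced functor C[S^{-1}] → D is an equivalence of categories. -/
open CategoryTheory

namespace Stmt9Aux

open CategoryTheory.Category CategoryTheory.Localization

variable {C D : Type*} [Category C] [Category D]

/-- The class of morphisms inverted by `R`. -/
abbrev WW (R : C ⥤ D) : MorphismProperty C :=
  (MorphismProperty.isomorphisms D).inverseImage R

variable (R : C ⥤ D) (L : D ⥤ C) (adj : L ⊣ R) [L.Full] [L.Faithful]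

include adj

lemma counit_mem (X : C) : (WW R) (adj.counit.app X) := by
  change IsIso (R.map (adj.counit.app X))
  exact inferInstance

lemma hasRightCalculus : (WW R).HasRightCalculusOfFractions where
  exists_rightFraction X Y φ := by
    have : IsIso (R.map φ.s) := φ.hs
    refine ⟨MorphismProperty.RightFraction.mk (adj.counit.app X) (counit_mem R L adj X)
      (L.map (R.map φ.f ≫ inv (R.map φ.s)) ≫ adj.counit.app Y), ?_⟩
    have h1 := adj.counit.naturality φ.s
    have h2 := adj.counit.naturality φ.f
    dsimp at h1 h2
    rw [assoc, ← h1, ← L.map_comp_assoc, assoc, IsIso.inv_hom_id, comp_id, h2]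
  ext X Y Y' f₁ f₂ s hs h := by
    have : IsIso (R.map s) := hs
    have hR : R.map f₁ = R.map f₂ := by
      have := congrArg R.map h
      simp only [R.map_comp] at this
      exact (cancel_mono (R.map s)).1 this
    refine ⟨_, adj.counit.app X, counit_mem R L adj X, ?_⟩
    have h1 := adj.counit.naturality f₁
    have h2 := adj.counit.naturality f₂
    dsimp at h1 h2
    rw [← h1, ← h2, hR]

lemma isLocalization : R.IsLocalization (WW R) := by
  have hR : (WW R).IsInvertedBy R := fun _ _ _ hf => hf
  have : ∀ (X : C), IsIso ((Functor.whiskerRight adj.counit (WW R).Q).app X) := fun X =>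
    Localization.inverts (WW R).Q (WW R) _ (counit_mem R L adj X)
  have : IsIso (Functor.whiskerRight adj.counit (WW R).Q) := NatIso.isIso_of_isIso_app _
  letI : IsIso adj.unit := adj.unit_isIso_of_L_fully_faithful
  let e : (WW R).Localization ≌ D :=
    CategoryTheory.Equivalence.mk (Localization.lift R hR (WW R).Q) (L ⋙ (WW R).Q)
      (liftNatIso (WW R).Q (WW R) (WW R).Q (R ⋙ L ⋙ (WW R).Q) _ _
        ((WW R).Q.leftUnitor.symm ≪≫ (asIso (Functor.whiskerRight adj.counit (WW R).Q)).symm))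
      (Functor.associator _ _ _ ≪≫ Functor.isoWhiskerLeft _ (Localization.fac R hR (WW R).Q) ≪≫
        (asIso adj.unit).symm)
  exact Functor.IsLocalization.of_equivalence_target (WW R).Q (WW R) R e
    (Localization.fac R hR (WW R).Q)

end Stmt9Aux

/-- Let `R : C ⥤ D` be a functor admitting a fully faithful left adjoint
`L : D ⥤ C`, and let `S` be the class of morphisms of `C` sent to isomorphisms by `R`.
Then `S` admits a calculus of right fractions, and the induced functor `C[S⁻¹] → D` is an
equivalence (i.e. `R` exhibits `D` as the localization of `C` at `S`). -/
theorem stmt_9 (C D : Type*) [Category C] [Category D]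
    (R : C ⥤ D) (L : D ⥤ C) (adj : L ⊣ R) [L.Full] [L.Faithful] :
    ((MorphismProperty.isomorphisms D).inverseImage R).HasRightCalculusOfFractions ∧
      R.IsLocalization ((MorphismProperty.isomorphisms D).inverseImage R) := by
  exact ⟨Stmt9Aux.hasRightCalculus R L adj, Stmt9Aux.isLocalization R L adj⟩
end

section
/- Let C be a small K-linear category and Pre(C) = Func(C^op, Vec_K) its category of presheaves. Let {X_i}_{i ∈ S} be a family of representable presheaves with the property that for every object A of C, Hom_{Pre(C)}(Yoneda(A), X_i) ≠ 0 for only finitely many i ∈ S. Then the canonical morphism from the coproduct ∐_{i∈S} X_i to the product ∏_{i∈S} X_i (given by identity components on the diagonal and zero off it) is an isomorphism; hence this coproduct is a biproduct. -/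
open CategoryTheory CategoryTheory.Limits

lemma exists_ne_zero_of_not_isZero {K : Type} [Field K] {M : ModuleCat K}
    (h : ¬ IsZero M) : ∃ x : M, x ≠ 0 := by
  by_contra h'
  push_neg at h'
  haveI : Subsingleton M := ⟨fun a b => by rw [h' a, h' b]⟩
  exact h (ModuleCat.isZero_of_subsingleton M)

open CategoryTheory CategoryTheory.Limits

lemma lemA {K : Type} [Field K] {S : Type} [DecidableEq S] (M : S → ModuleCat K)
    (hfin : {i | ¬ IsZero (M i)}.Finite) :
    IsIso (Sigma.desc (f := M) fun i => Pi.lift (f := M) fun j =>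
      if h : i = j then eqToHom (congrArg M h) else 0) := by
  classical
  set c : (∐ M) ⟶ (∏ᶜ M) := Sigma.desc (f := M) fun i => Pi.lift (f := M) fun j =>
      if h : i = j then eqToHom (congrArg M h) else 0 with hc
  haveI : Fintype {i | ¬ IsZero (M i)} := hfin.fintype
  set N : {i | ¬ IsZero (M i)} → ModuleCat K := fun i => M i.1 with hN
  let e : (∐ N) ≅ (∏ᶜ N) := (biproduct.isoCoproduct N).symm ≪≫ biproduct.isoProduct N
  let u : (∐ N) ⟶ (∐ M) := Sigma.desc fun i => Sigma.ι M i.1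
  let r : (∏ᶜ M) ⟶ (∏ᶜ N) := Pi.lift fun i => Pi.π M i.1
  have fact0 : ∀ i j, Sigma.ι M i ≫ c ≫ Pi.π M j =
      if h : i = j then eqToHom (congrArg M h) else 0 := by
    intro i j; simp [hc]
  have facte : ∀ i j, Sigma.ι N i ≫ e.hom ≫ Pi.π N j =
      if h : i = j then eqToHom (congrArg N h) else 0 := by
    intro i j
    simp [e, biproduct.isoCoproduct_inv, biproduct.isoProduct_hom, biproduct.ι_π]
  have dite_eq : ∀ (i : S) (hiT : i ∈ {i | ¬ IsZero (M i)}) (j : {i | ¬ IsZero (M i)}),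
      (if h : i = j.1 then eqToHom (congrArg M h) else 0)
        = (if h : (⟨i, hiT⟩ : {i | ¬ IsZero (M i)}) = j then eqToHom (congrArg N h) else 0) := by
    rintro i hiT ⟨j, hj⟩
    by_cases h : i = j
    · subst h; simp; rfl
    · simp [h]
  have key1 : c ≫ (r ≫ e.inv ≫ u) = 𝟙 (∐ M) := by
    refine Sigma.hom_ext _ _ fun i => ?_
    by_cases hi : IsZero (M i)
    · exact hi.eq_of_src _ _
    · have hiT : i ∈ {i | ¬ IsZero (M i)} := hi
      have step1 : Sigma.ι M i ≫ c ≫ r = Sigma.ι N ⟨i, hiT⟩ ≫ e.hom := by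
        refine Pi.hom_ext _ _ fun j => ?_
        have h1 := fact0 i j.1
        have h2 := facte ⟨i, hiT⟩ j
        simp only [Category.assoc, r, limit.lift_π, Fan.mk_π_app]
        rw [h1, h2, dite_eq i hiT j]
      calc Sigma.ι M i ≫ c ≫ r ≫ e.inv ≫ u
          = (Sigma.ι M i ≫ c ≫ r) ≫ e.inv ≫ u := by simp only [Category.assoc]
        _ = Sigma.ι N ⟨i, hiT⟩ ≫ e.hom ≫ e.inv ≫ u := by rw [step1]; simp only [Category.assoc]
        _ = Sigma.ι N ⟨i, hiT⟩ ≫ u := by simp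
        _ = Sigma.ι M i ≫ 𝟙 (∐ M) := by simp [u]
  have key2 : (r ≫ e.inv ≫ u) ≫ c = 𝟙 (∏ᶜ M) := by
    refine Pi.hom_ext _ _ fun j => ?_
    by_cases hj : IsZero (M j)
    · exact hj.eq_of_tgt _ _
    · have hjT : j ∈ {i | ¬ IsZero (M i)} := hj
      have step2 : u ≫ c ≫ Pi.π M j = e.hom ≫ Pi.π N ⟨j, hjT⟩ := by
        refine Sigma.hom_ext _ _ fun i => ?_
        have h1 := fact0 i.1 j
        have h2 := facte i ⟨j, hjT⟩
        simp only [u, colimit.ι_desc, Cofan.mk_ι_app, ← Category.assoc]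
        rw [Category.assoc, h1, Category.assoc, h2]
        obtain ⟨i, hi⟩ := i
        exact dite_eq i hi ⟨j, hjT⟩
      calc (r ≫ e.inv ≫ u) ≫ c ≫ Pi.π M j
          = r ≫ e.inv ≫ (u ≫ c ≫ Pi.π M j) := by simp only [Category.assoc]
        _ = r ≫ e.inv ≫ e.hom ≫ Pi.π N ⟨j, hjT⟩ := by rw [step2]
        _ = r ≫ Pi.π N ⟨j, hjT⟩ := by simp
        _ = 𝟙 (∏ᶜ M) ≫ Pi.π M j := by simp [r]
  refine ⟨r ≫ e.inv ≫ u, key1, key2⟩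

/-- Let `C` be a small `K`-linear category and `Pre(C) = Func(Cᵒᵖ, Vec_K)`
its presheaf category.  Let `(X i)_{i ∈ S}` be a family of representable presheaves such that
for every object `B` of `C` only finitely many `i` admit a nonzero morphism
`Yoneda(B) ⟶ X i`.  Then the canonical morphism `∐ X i ⟶ ∏ X i` (identity components on the
diagonal, zero off it) is an isomorphism; hence the coproduct is a biproduct. -/
theorem stmt_10 (K : Type) [Field K] (C : Type) [SmallCategory C]
    [Preadditive C] [CategoryTheory.Linear K C]
    (S : Type) [DecidableEq S] (A : S → C)
    (X : S → (Cᵒᵖ ⥤ ModuleCat K))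
    (hX : ∀ i, X i = (linearYoneda K C).obj (A i))
    (hfin : ∀ B : C, {i : S | ∃ f : (linearYoneda K C).obj B ⟶ X i, f ≠ 0}.Finite) :
    IsIso (Sigma.desc (f := X) fun i => Pi.lift (f := X) fun j =>
      if h : i = j then eqToHom (congrArg X h) else 0) := by
  set ψ : (∐ X) ⟶ (∏ᶜ X) := Sigma.desc (f := X) fun i => Pi.lift (f := X) fun j =>
      if h : i = j then eqToHom (congrArg X h) else 0 with hψ
  have happ : ∀ b : Cᵒᵖ, IsIso (ψ.app b) := by
    intro b
    let G := (CategoryTheory.evaluation Cᵒᵖ (ModuleCat K)).obj b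
    have hfb : {i | ¬ IsZero (G.obj (X i))}.Finite := by
      apply (hfin b.unop).subset
      intro i hi
      simp only [Set.mem_setOf_eq] at hi
      rw [hX i] at hi
      obtain ⟨g, hg⟩ := exists_ne_zero_of_not_isZero hi
      refine ⟨(linearYoneda K C).map g ≫ eqToHom (hX i).symm, fun hf0 => ?_⟩
      have h1 : (linearYoneda K C).map g = 0 := by
        have : ((linearYoneda K C).map g ≫ eqToHom (hX i).symm) ≫ eqToHom (hX i) = 0 := by
          rw [hf0]; simp
        simpa using this
      apply hg
      have h2 := congrArg (fun t => (t.app b) (𝟙 b.unop)) h1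
      have h3 : 𝟙 b.unop ≫ (g : b.unop ⟶ A i) = 0 := h2
      have h4 : 𝟙 b.unop ≫ (g : b.unop ⟶ A i) = (g : b.unop ⟶ A i) := Category.id_comp _
      exact h4.symm.trans h3
    have key : sigmaComparison G X ≫ G.map ψ ≫ piComparison G X
        = Sigma.desc (f := fun i => G.obj (X i)) (fun i => Pi.lift fun j =>
            if h : i = j then eqToHom (congrArg (fun i => G.obj (X i)) h) else 0) := by
      refine Sigma.hom_ext _ _ fun i => ?_
      refine Pi.hom_ext _ _ fun j => ?_
      have mid : Sigma.ι X i ≫ ψ ≫ Pi.π X j =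
          if h : i = j then eqToHom (congrArg X h) else 0 := by simp [hψ]
      simp only [Category.assoc, piComparison_comp_π, ι_comp_sigmaComparison_assoc,
        colimit.ι_desc, Cofan.mk_ι_app, limit.lift_π, Fan.mk_π_app]
      rw [← G.map_comp, ← G.map_comp, mid]
      by_cases h : i = j
      · subst h; simp
      · simp [h]
    haveI : IsIso (Sigma.desc (f := fun i => G.obj (X i)) (fun i => Pi.lift fun j =>
        if h : i = j then eqToHom (congrArg (fun i => G.obj (X i)) h) else 0)) := lemA _ hfb
    have hGmap : G.map ψ = inv (sigmaComparison G X) ≫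
        (Sigma.desc (f := fun i => G.obj (X i)) (fun i => Pi.lift fun j =>
          if h : i = j then eqToHom (congrArg (fun i => G.obj (X i)) h) else 0)) ≫
        inv (piComparison G X) := by
      rw [← key]; simp
    have : IsIso (G.map ψ) := by rw [hGmap]; infer_instance
    exact this
  exact NatIso.isIso_of_isIso_app ψ
end

section
/- Let C be a symmetrizable generalized Cartan matrix, B(C) the quantum boson algebra, and B_Z(C) the bosonic extension. The assignment E_i ↦ E_{i,0} and F_i ↦ E_{i,1} extends to a well-defined Q(q)-algebra homomorphism B(C) → B_Z(C). -/
/-! **Statement 13.** For a symmetrizable generalized Cartan matrix `C`, the assignment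
`E_i ↦ E_{i,0}`, `F_i ↦ E_{i,1}` extends to a well-defined `ℚ(q)`-algebra homomorphism
from the quantum boson algebra `B(C)` to the bosonic extension `B_ℤ(C)`. -/

noncomputable section

open scoped BigOperators

/-- The field `ℚ(q)`. -/
abbrev QF : Type := RatFunc ℚ

/-- The quantum integer `[n]_t = (tⁿ - t⁻ⁿ)/(t - t⁻¹)`. -/
def qInt (t : QF) (n : ℕ) : QF := (t ^ n - t⁻¹ ^ n) / (t - t⁻¹)

/-- The quantum factorial `[n]_t!`. -/
def qFact (t : QF) (n : ℕ) : QF := ∏ m ∈ Finset.range n, qInt t (m + 1)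

/-- The quantum binomial coefficient `binom(n, m)_t`. -/
def qBinom (t : QF) (n m : ℕ) : QF := qFact t n / (qFact t m * qFact t (n - m))

variable {I : Type}

/-- The quantum Serre element
`∑_{m=0}^{1-C_{ij}} (-1)^m binom(1-C_{ij}, m)_{q_i} e_i^m e_j e_i^{1-C_{ij}-m}`
attached to a family `e` of elements of a `ℚ(q)`-algebra `A`. -/
def serreElem (A : Type) [Ring A] [Algebra QF A] (C : I → I → ℤ) (d : I → ℕ)
    (e : I → A) (i j : I) : A :=
  ∑ m ∈ Finset.range ((1 - C i j).toNat + 1),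
    (((-1 : QF) ^ m * qBinom (RatFunc.X ^ d i) (1 - C i j).toNat m) •
      (e i ^ m * e j * e i ^ ((1 - C i j).toNat - m)))

/-- The defining relations of the quantum boson algebra `B(C)`: quantum Serre relations for
the `E_i` and the `F_i` (generators `Sum.inl i` and `Sum.inr i` respectively), and the
quantum boson relations `F_i E_j = q_i^{-C_{ij}} E_j F_i + δ_{ij}/(1-q_i²)`. -/
inductive BosonRel (C : I → I → ℤ) (d : I → ℕ) [DecidableEq I] :
    FreeAlgebra QF (I ⊕ I) → FreeAlgebra QF (I ⊕ I) → Prop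
  | serreE (i j : I) (h : i ≠ j) :
      BosonRel C d
        (serreElem (FreeAlgebra QF (I ⊕ I)) C d (fun l => FreeAlgebra.ι QF (Sum.inl l)) i j) 0
  | serreF (i j : I) (h : i ≠ j) :
      BosonRel C d
        (serreElem (FreeAlgebra QF (I ⊕ I)) C d (fun l => FreeAlgebra.ι QF (Sum.inr l)) i j) 0
  | boson (i j : I) :
      BosonRel C d
        (FreeAlgebra.ι QF (Sum.inr i) * FreeAlgebra.ι QF (Sum.inl j))
        ((((RatFunc.X ^ d i : QF) ^ (-(C i j))) •
            (FreeAlgebra.ι QF (Sum.inl j) * FreeAlgebra.ι QF (Sum.inr i)))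
          + (if i = j then (1 - (RatFunc.X ^ d i : QF) ^ 2)⁻¹ else 0) • 1)

/-- The quantum boson algebra `B(C)`. -/
def BosonAlg (C : I → I → ℤ) (d : I → ℕ) [DecidableEq I] := RingQuot (BosonRel C d)

instance (C : I → I → ℤ) (d : I → ℕ) [DecidableEq I] : Ring (BosonAlg C d) :=
  inferInstanceAs (Ring (RingQuot (BosonRel C d)))

instance (C : I → I → ℤ) (d : I → ℕ) [DecidableEq I] : Algebra QF (BosonAlg C d) :=
  inferInstanceAs (Algebra QF (RingQuot (BosonRel C d)))

/-- The generator `E_i` of `B(C)`. -/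
def bE (C : I → I → ℤ) (d : I → ℕ) [DecidableEq I] (i : I) : BosonAlg C d :=
  RingQuot.mkAlgHom QF (BosonRel C d) (FreeAlgebra.ι QF (Sum.inl i))

/-- The generator `F_i` of `B(C)`. -/
def bF (C : I → I → ℤ) (d : I → ℕ) [DecidableEq I] (i : I) : BosonAlg C d :=
  RingQuot.mkAlgHom QF (BosonRel C d) (FreeAlgebra.ι QF (Sum.inr i))

/-- The defining relations of the bosonic extension `B_ℤ(C)`: quantum Serre relations among
the `E_{i,n}` for each fixed `n`, and the relations
`E_{i,n+m} E_{j,n} = q_i^{(-1)^m C_{ij}} E_{j,n} E_{i,n+m} + δ_{(i,j),(m,1)}/(1-q_i²)`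
for `m ≥ 1`. -/
inductive BosonZRel (C : I → I → ℤ) (d : I → ℕ) [DecidableEq I] :
    FreeAlgebra QF (I × ℤ) → FreeAlgebra QF (I × ℤ) → Prop
  | serre (n : ℤ) (i j : I) (h : i ≠ j) :
      BosonZRel C d
        (serreElem (FreeAlgebra QF (I × ℤ)) C d (fun l => FreeAlgebra.ι QF (l, n)) i j) 0
  | boson (i j : I) (n : ℤ) (m : ℕ) (h : 1 ≤ m) :
      BosonZRel C d
        (FreeAlgebra.ι QF (i, n + m) * FreeAlgebra.ι QF (j, n))
        ((((RatFunc.X ^ d i : QF) ^ ((-1 : ℤ) ^ m * C i j)) •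
            (FreeAlgebra.ι QF (j, n) * FreeAlgebra.ι QF (i, n + m)))
          + (if i = j ∧ m = 1 then (1 - (RatFunc.X ^ d i : QF) ^ 2)⁻¹ else 0) • 1)

/-- The bosonic extension `B_ℤ(C)`. -/
def BosonZAlg (C : I → I → ℤ) (d : I → ℕ) [DecidableEq I] := RingQuot (BosonZRel C d)

instance (C : I → I → ℤ) (d : I → ℕ) [DecidableEq I] : Ring (BosonZAlg C d) :=
  inferInstanceAs (Ring (RingQuot (BosonZRel C d)))

instance (C : I → I → ℤ) (d : I → ℕ) [DecidableEq I] : Algebra QF (BosonZAlg C d) :=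
  inferInstanceAs (Algebra QF (RingQuot (BosonZRel C d)))

/-- The generator `E_{i,n}` of `B_ℤ(C)`. -/
def bzE (C : I → I → ℤ) (d : I → ℕ) [DecidableEq I] (i : I) (n : ℤ) : BosonZAlg C d :=
  RingQuot.mkAlgHom QF (BosonZRel C d) (FreeAlgebra.ι QF (i, n))

theorem map_serreElem {A B : Type} [Ring A] [Algebra QF A] [Ring B] [Algebra QF B]
    (ψ : A →ₐ[QF] B) (C : I → I → ℤ) (d : I → ℕ) (e : I → A) (i j : I) :
    ψ (serreElem A C d e i j) = serreElem B C d (fun l => ψ (e l)) i j := by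
  simp [serreElem, map_sum]

theorem stmt_13 [DecidableEq I] (C : I → I → ℤ) (d : I → ℕ)
    (hC2 : ∀ i, C i i = 2) (hCneg : ∀ i j, i ≠ j → C i j ≤ 0)
    (hC0 : ∀ i j, C i j = 0 ↔ C j i = 0)
    (hd : ∀ i, 0 < d i)
    (hsym : ∀ i j, (d i : ℤ) * C i j = (d j : ℤ) * C j i) :
    ∃ φ : BosonAlg C d →ₐ[QF] BosonZAlg C d,
      (∀ i, φ (bE C d i) = bzE C d i 0) ∧ (∀ i, φ (bF C d i) = bzE C d i 1) := by
  classical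
  set f : FreeAlgebra QF (I ⊕ I) →ₐ[QF] BosonZAlg C d :=
    FreeAlgebra.lift QF (Sum.elim (fun i => bzE C d i 0) (fun i => bzE C d i 1)) with hf
  have hrel : ∀ ⦃x y : FreeAlgebra QF (I ⊕ I)⦄, BosonRel C d x y → f x = f y := by
    intro x y h
    induction h with
    | serreE i j h =>
        rw [map_serreElem, map_zero]
        have h0 := RingQuot.mkAlgHom_rel QF (BosonZRel.serre (C := C) (d := d) 0 i j h)
        rw [map_serreElem, map_zero] at h0
        simp only [hf, FreeAlgebra.lift_ι_apply, Sum.elim_inl, Sum.elim_inr]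
        exact h0
    | serreF i j h =>
        rw [map_serreElem, map_zero]
        have h0 := RingQuot.mkAlgHom_rel QF (BosonZRel.serre (C := C) (d := d) 1 i j h)
        rw [map_serreElem, map_zero] at h0
        simp only [hf, FreeAlgebra.lift_ι_apply, Sum.elim_inl, Sum.elim_inr]
        exact h0
    | boson i j =>
        have h0 := RingQuot.mkAlgHom_rel QF
          (BosonZRel.boson (C := C) (d := d) i j 0 1 le_rfl)
        simp only [map_add, map_mul, map_smul, map_one] at h0 ⊢
        simp only [hf, FreeAlgebra.lift_ι_apply, Sum.elim_inl, Sum.elim_inr]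
        simp [hf, bzE, pow_one, neg_one_mul] at h0 ⊢
        exact h0
  refine ⟨RingQuot.liftAlgHom QF ⟨f, hrel⟩, fun i => ?_, fun i => ?_⟩ <;>
  · show RingQuot.liftAlgHom QF ⟨f, hrel⟩ (RingQuot.mkAlgHom QF _ _) = _
    rw [RingQuot.liftAlgHom_mkAlgHom_apply]
    simp only [hf, FreeAlgebra.lift_ι_apply, Sum.elim_inl, Sum.elim_inr]

end
end

section
/- Let B_Z(C) be the bosonic extension of a symmetrizable generalized Cartan matrix C. There exists a q-antilinear antiautomorphism D of B_Z(C), i.e. an additive bijection satisfying D(ab) = D(b)D(a), D(λ·x) = bar(λ)·D(x) for λ ∈ Q(q) (where bar(q) = q^{-1}), determined by D(E_{i,n}) = E_{i,n+1} for all i ∈ I, n ∈ Z. -/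
/-! **Statement 14.** The bosonic extension `B_ℤ(C)` admits a `q`-antilinear
antiautomorphism `D` determined by `D(E_{i,n}) = E_{i,n+1}`. -/

noncomputable section

open scoped BigOperators

variable {I : Type}

namespace Stmt14Aux

open MulOpposite

lemma X_pow_ne_one {n : ℕ} (hn : n ≠ 0) : (RatFunc.X : QF) ^ n ≠ 1 := by
  intro h
  have h2 : ((Polynomial.X : Polynomial ℚ) ^ n) = 1 := by
    apply RatFunc.algebraMap_injective (K := ℚ)
    rw [map_pow, RatFunc.algebraMap_X, map_one, h]
  have h3 := congrArg Polynomial.natDegree h2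
  simp [Polynomial.natDegree_X_pow] at h3
  exact hn h3

lemma qBinom_symm (t : QF) {N m : ℕ} (hm : m ≤ N) :
    qBinom t N (N - m) = qBinom t N m := by
  unfold qBinom
  rw [Nat.sub_sub_self hm, mul_comm]

lemma flip_div (x y z w : QF) : (x - y) / (z - w) = (y - x) / (w - z) := by
  rw [← neg_div_neg_eq, neg_sub, neg_sub]

lemma map_qInt (β : QF ≃+* QF) (hβ : β RatFunc.X = RatFunc.X⁻¹) (e n : ℕ) :
    β (qInt ((RatFunc.X : QF) ^ e) n) = qInt ((RatFunc.X : QF) ^ e) n := by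
  unfold qInt
  simp only [map_div₀, map_sub, map_pow, map_inv₀, hβ, inv_pow, inv_inv]
  exact flip_div _ _ _ _

lemma map_qFact (β : QF ≃+* QF) (hβ : β RatFunc.X = RatFunc.X⁻¹) (e n : ℕ) :
    β (qFact ((RatFunc.X : QF) ^ e) n) = qFact ((RatFunc.X : QF) ^ e) n := by
  unfold qFact
  rw [map_prod]
  exact Finset.prod_congr rfl fun m _ => map_qInt β hβ e (m + 1)

lemma map_qBinom (β : QF ≃+* QF) (hβ : β RatFunc.X = RatFunc.X⁻¹) (e n m : ℕ) :
    β (qBinom ((RatFunc.X : QF) ^ e) n m) = qBinom ((RatFunc.X : QF) ^ e) n m := by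
  unfold qBinom
  rw [map_div₀, map_mul, map_qFact β hβ, map_qFact β hβ, map_qFact β hβ]

section

variable {I : Type} [DecidableEq I] (C : I → I → ℤ) (d : I → ℕ)

/-- The `QF`-algebra structure on `(BosonZAlg C d)ᵐᵒᵖ` twisted by `β`. -/
def twAlg (β : QF ≃+* QF) : Algebra QF (BosonZAlg C d)ᵐᵒᵖ :=
  RingHom.toAlgebra' ((algebraMap QF (BosonZAlg C d)ᵐᵒᵖ).comp (β : QF →+* QF))
    (fun c x => Algebra.commutes (β c) x)

/-- The `β`-twisted algebra hom from the free algebra sending `ι (i,n)` to `op E_{i,n+k}`. -/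
def fAlg (β : QF ≃+* QF) (k : ℤ) :=
  @FreeAlgebra.lift QF (I × ℤ) _ ((BosonZAlg C d)ᵐᵒᵖ) _ (twAlg C d β)
    (fun p => op (bzE C d p.1 (p.2 + k)))

/-- The underlying ring hom, semilinear over `β`. -/
def fHom (β : QF ≃+* QF) (k : ℤ) : FreeAlgebra QF (I × ℤ) →+* (BosonZAlg C d)ᵐᵒᵖ :=
  @AlgHom.toRingHom QF _ _ _ _ _ _ (twAlg C d β) (fAlg C d β k)

lemma fHom_ι (β : QF ≃+* QF) (k : ℤ) (i : I) (n : ℤ) :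
    fHom C d β k (FreeAlgebra.ι QF (i, n)) = op (bzE C d i (n + k)) :=
  @FreeAlgebra.lift_ι_apply QF (I × ℤ) _ ((BosonZAlg C d)ᵐᵒᵖ) _ (twAlg C d β)
    (fun p => op (bzE C d p.1 (p.2 + k))) (i, n)

lemma fHom_algebraMap (β : QF ≃+* QF) (k : ℤ) (c : QF) :
    fHom C d β k (algebraMap QF _ c) = op (algebraMap QF (BosonZAlg C d) (β c)) :=
  @AlgHom.commutes QF (FreeAlgebra QF (I × ℤ)) ((BosonZAlg C d)ᵐᵒᵖ) _ _ _ _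
    (twAlg C d β) (fAlg C d β k) c

lemma fHom_smul (β : QF ≃+* QF) (k : ℤ) (c : QF) (x : FreeAlgebra QF (I × ℤ)) :
    fHom C d β k (c • x) = β c • fHom C d β k x := by
  rw [Algebra.smul_def, map_mul, fHom_algebraMap, Algebra.smul_def,
    MulOpposite.algebraMap_apply]

lemma fHom_one (β : QF ≃+* QF) (k : ℤ) : fHom C d β k 1 = 1 := map_one _


lemma field_identity (t : QF) (ht : t ≠ 0) (h1 : (1:QF) - t ^ 2 ≠ 0) :
    (1 - (t⁻¹) ^ 2)⁻¹ = -(((t ^ (-2 : ℤ)))⁻¹ * (1 - t ^ 2)⁻¹) := by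
  have h1' : (t ^ 2 - 1 : QF) ≠ 0 := by
    intro hc; apply h1; linear_combination -hc
  rw [zpow_neg, inv_inv, show ((2:ℤ)) = ((2:ℕ) : ℤ) from rfl, zpow_natCast]
  field_simp
  ring

open MulOpposite in
lemma fHom_rel (hC2 : ∀ i, C i i = 2) (hd : ∀ i, 0 < d i)
    (β : QF ≃+* QF) (hβ : β RatFunc.X = RatFunc.X⁻¹) (k : ℤ) :
    ∀ ⦃x y⦄, BosonZRel C d x y → fHom C d β k x = fHom C d β k y := by
  intro x y hxy
  cases hxy with
  | serre n i j hij =>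
    rw [map_zero]
    set N := (1 - C i j).toNat with hN
    set Ei := bzE C d i (n + k) with hEi
    set Ej := bzE C d j (n + k) with hEj
    have hserre : (∑ m ∈ Finset.range (N + 1),
        ((-1 : QF) ^ m * qBinom (RatFunc.X ^ d i) N m) •
          (Ei ^ m * Ej * Ei ^ (N - m))) = 0 := by
      have h := RingQuot.mkAlgHom_rel QF (BosonZRel.serre (C := C) (d := d) (n + k) i j hij)
      rw [map_zero] at h
      refine Eq.trans ?_ h
      simp only [serreElem, map_sum]
      refine Finset.sum_congr rfl fun m hm => ?_
      rw [map_smul, map_mul, map_mul, map_pow, map_pow]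
      rfl
    simp only [serreElem, map_sum]
    calc ∑ m ∈ Finset.range (N + 1),
          fHom C d β k (((-1 : QF) ^ m * qBinom (RatFunc.X ^ d i) N m) •
            (FreeAlgebra.ι QF (i, n) ^ m * FreeAlgebra.ι QF (j, n) *
              FreeAlgebra.ι QF (i, n) ^ (N - m)))
        = ∑ m ∈ Finset.range (N + 1),
            op ((((-1 : QF)) ^ m * qBinom (RatFunc.X ^ d i) N m) •
              (Ei ^ (N - m) * (Ej * Ei ^ m))) := by
          refine Finset.sum_congr rfl fun m hm => ?_
          rw [fHom_smul]
          rw [map_mul β, map_pow β, map_neg β, map_one β, map_qBinom β hβ]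
          rw [map_mul, map_mul, map_pow, map_pow, fHom_ι, fHom_ι]
          rw [← op_pow, ← op_pow, ← op_mul, ← op_mul, ← MulOpposite.op_smul]
      _ = op (∑ m ∈ Finset.range (N + 1),
            ((((-1 : QF)) ^ m * qBinom (RatFunc.X ^ d i) N m) •
              (Ei ^ (N - m) * (Ej * Ei ^ m)))) := (Finset.op_sum _ _).symm
      _ = 0 := by
          suffices hkey : (∑ m ∈ Finset.range (N + 1),
              ((((-1 : QF)) ^ m * qBinom (RatFunc.X ^ d i) N m) •
                (Ei ^ (N - m) * (Ej * Ei ^ m)))) = 0 by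
            rw [hkey, op_zero]
          rw [← Finset.sum_range_reflect]
          simp only [Nat.add_sub_cancel]
          have h2 : ∀ m ∈ Finset.range (N + 1),
              (((-1 : QF)) ^ (N - m) * qBinom (RatFunc.X ^ d i) N (N - m)) •
                (Ei ^ (N - (N - m)) * (Ej * Ei ^ (N - m)))
              = (-1 : QF) ^ N • ((((-1 : QF)) ^ m * qBinom (RatFunc.X ^ d i) N m) •
                  (Ei ^ m * Ej * Ei ^ (N - m))) := by
            intro m hm
            have hm' : m ≤ N := Nat.lt_succ_iff.mp (Finset.mem_range.mp hm)
            rw [Nat.sub_sub_self hm', qBinom_symm _ hm', smul_smul]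
            congr 1
            · have hsq : ((-1 : QF)) ^ m * (-1) ^ m = 1 := by
                rw [← mul_pow]; norm_num
              have hNm : ((-1 : QF)) ^ (N - m) * (-1) ^ m = (-1) ^ N := by
                rw [← pow_add, Nat.sub_add_cancel hm']
              have hsgn : ((-1 : QF)) ^ (N - m) = (-1) ^ N * (-1) ^ m := by
                calc ((-1 : QF)) ^ (N - m)
                    = (-1) ^ (N - m) * ((-1) ^ m * (-1) ^ m) := by rw [hsq, mul_one]
                  _ = ((-1) ^ (N - m) * (-1) ^ m) * (-1) ^ m := by ring
                  _ = (-1) ^ N * (-1) ^ m := by rw [hNm]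
              rw [hsgn]; ring
            · rw [mul_assoc]
          rw [Finset.sum_congr rfl h2, ← Finset.smul_sum, hserre, smul_zero]
  | boson i j n m hm =>
    simp only [map_add, map_mul, fHom_smul, fHom_ι, map_one]
    rw [show n + (m : ℤ) + k = n + k + m by ring]
    set Xi := bzE C d i (n + k + m) with hXi
    set Y := bzE C d j (n + k) with hY
    have ht0 : ((RatFunc.X : QF) ^ d i) ≠ 0 := pow_ne_zero _ RatFunc.X_ne_zero
    have hc0 : ((RatFunc.X ^ d i : QF) ^ ((-1 : ℤ) ^ m * C i j)) ≠ 0 := zpow_ne_zero _ ht0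
    have hβc : β ((RatFunc.X ^ d i : QF) ^ ((-1 : ℤ) ^ m * C i j))
        = ((RatFunc.X ^ d i : QF) ^ ((-1 : ℤ) ^ m * C i j))⁻¹ := by
      rw [map_zpow₀, map_pow, hβ, inv_pow, inv_zpow]
    have hβd : β (if i = j ∧ m = 1 then (1 - (RatFunc.X ^ d i : QF) ^ 2)⁻¹ else 0)
        = -((((RatFunc.X ^ d i : QF) ^ ((-1 : ℤ) ^ m * C i j))⁻¹) *
            (if i = j ∧ m = 1 then (1 - (RatFunc.X ^ d i : QF) ^ 2)⁻¹ else 0)) := by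
      by_cases hij : i = j ∧ m = 1
      · obtain ⟨rfl, rfl⟩ := hij
        rw [if_pos ⟨rfl, rfl⟩, hC2 i]
        have h1 : (1 : QF) - ((RatFunc.X : QF) ^ d i) ^ 2 ≠ 0 := by
          intro hcon
          exact X_pow_ne_one (n := d i * 2) (by have := hd i; omega)
            (by rw [pow_mul]; exact (sub_eq_zero.mp hcon).symm)
        rw [map_inv₀, map_sub, map_one, map_pow, map_pow, hβ, inv_pow]
        rw [show ((-1 : ℤ) ^ 1 * 2) = (-2 : ℤ) by norm_num]
        exact field_identity _ ht0 h1
      · rw [if_neg hij, map_zero, mul_zero, neg_zero]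
    have hrel : Xi * Y = ((RatFunc.X ^ d i : QF) ^ ((-1 : ℤ) ^ m * C i j)) • (Y * Xi)
        + (if i = j ∧ m = 1 then (1 - (RatFunc.X ^ d i : QF) ^ 2)⁻¹ else 0) • 1 := by
      have h := RingQuot.mkAlgHom_rel QF (BosonZRel.boson (C := C) (d := d) i j (n + k) m hm)
      rw [map_add, map_mul, map_smul, map_mul, map_smul, map_one] at h
      exact h
    rw [← MulOpposite.op_mul, ← MulOpposite.op_mul, ← MulOpposite.op_smul,
      ← MulOpposite.op_one, ← MulOpposite.op_smul, ← MulOpposite.op_add]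
    refine congrArg MulOpposite.op ?_
    rw [hβc, hβd, hrel, smul_add, smul_smul, inv_mul_cancel₀ hc0, one_smul, smul_smul,
      add_assoc, ← add_smul, add_neg_cancel, zero_smul, add_zero]

end


section
variable {I : Type} [DecidableEq I] (C : I → I → ℤ) (d : I → ℕ)

open MulOpposite

/-- The `β`-semilinear antihomomorphism of `B_ℤ(C)` shifting indices by `k`, as a ring hom
to the opposite algebra. -/
def FF (hC2 : ∀ i, C i i = 2) (hd : ∀ i, 0 < d i) (β : QF ≃+* QF)
    (hβ : β RatFunc.X = RatFunc.X⁻¹) (k : ℤ) : BosonZAlg C d →+* (BosonZAlg C d)ᵐᵒᵖ :=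
  RingQuot.lift ⟨fHom C d β k, fHom_rel C d hC2 hd β hβ k⟩

variable (hC2 : ∀ i, C i i = 2) (hd : ∀ i, 0 < d i) (β β' : QF ≃+* QF)
    (hβ : β RatFunc.X = RatFunc.X⁻¹) (hβ' : β' RatFunc.X = RatFunc.X⁻¹) (k k' : ℤ)

lemma FF_mk (x : FreeAlgebra QF (I × ℤ)) :
    FF C d hC2 hd β hβ k (RingQuot.mkAlgHom QF (BosonZRel C d) x) = fHom C d β k x := by
  have h1 : RingQuot.mkAlgHom QF (BosonZRel C d) x = RingQuot.mkRingHom (BosonZRel C d) x := by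
    rw [← RingQuot.mkAlgHom_coe QF]; rfl
  rw [h1]
  exact RingQuot.lift_mkRingHom_apply _ _ _

lemma FF_bzE (i : I) (n : ℤ) :
    FF C d hC2 hd β hβ k (bzE C d i n) = op (bzE C d i (n + k)) := by
  show FF C d hC2 hd β hβ k
      (RingQuot.mkAlgHom QF (BosonZRel C d) (FreeAlgebra.ι QF (i, n))) = _
  rw [FF_mk, fHom_ι]

lemma FF_algebraMap (c : QF) :
    FF C d hC2 hd β hβ k (algebraMap QF (BosonZAlg C d) c)
      = op (algebraMap QF (BosonZAlg C d) (β c)) := by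
  rw [show (algebraMap QF (BosonZAlg C d)) c
      = RingQuot.mkAlgHom QF (BosonZRel C d) (algebraMap QF _ c) from
    ((RingQuot.mkAlgHom QF (BosonZRel C d)).commutes c).symm, FF_mk, fHom_algebraMap]

lemma FF_smul (c : QF) (x : BosonZAlg C d) :
    FF C d hC2 hd β hβ k (c • x) = β c • FF C d hC2 hd β hβ k x := by
  rw [Algebra.smul_def, map_mul, FF_algebraMap, Algebra.smul_def,
    MulOpposite.algebraMap_apply]

lemma FF_comp_id (hββ' : ∀ c, β' (β c) = c) (hkk' : k + k' = 0) (x : BosonZAlg C d) :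
    unop (FF C d hC2 hd β' hβ' k' (unop (FF C d hC2 hd β hβ k x))) = x := by
  let T : BosonZAlg C d →ₐ[QF] BosonZAlg C d :=
  { toFun := fun x => unop (FF C d hC2 hd β' hβ' k' (unop (FF C d hC2 hd β hβ k x)))
    map_one' := by simp
    map_mul' := fun a b => by simp [map_mul]
    map_zero' := by simp
    map_add' := fun a b => by simp [map_add]
    commutes' := fun c => by
      show unop (FF C d hC2 hd β' hβ' k'
          (unop (FF C d hC2 hd β hβ k (algebraMap QF (BosonZAlg C d) c))))
        = algebraMap QF (BosonZAlg C d) c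
      rw [Algebra.algebraMap_eq_smul_one c, FF_smul, map_one, unop_smul, unop_one,
        FF_smul, map_one, hββ', unop_smul, unop_one] }
  have hT : T = AlgHom.id QF (BosonZAlg C d) := by
    apply RingQuot.ringQuot_ext'
    apply FreeAlgebra.hom_ext
    funext p
    simp only [AlgHom.coe_comp, Function.comp_apply, AlgHom.coe_id, id_eq]
    show unop (FF C d hC2 hd β' hβ' k' (unop (FF C d hC2 hd β hβ k (bzE C d p.1 p.2))))
      = bzE C d p.1 p.2
    rw [FF_bzE, unop_op, FF_bzE, unop_op, add_assoc, hkk', add_zero]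
  exact DFunLike.congr_fun hT x

end

end Stmt14Aux

/-- Given the bar involution of `ℚ(q)` (the `ℚ`-algebra automorphism with
`bar q = q⁻¹`), there exists a `q`-antilinear antiautomorphism `D` of `B_ℤ(C)`: an additive
bijection with `D(ab) = D(b)·D(a)`, `D(λ·x) = bar(λ)·D(x)`, and `D(E_{i,n}) = E_{i,n+1}`. -/
theorem stmt_14 [DecidableEq I] (C : I → I → ℤ) (d : I → ℕ)
    (hC2 : ∀ i, C i i = 2) (hCneg : ∀ i j, i ≠ j → C i j ≤ 0)
    (hC0 : ∀ i j, C i j = 0 ↔ C j i = 0)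
    (hd : ∀ i, 0 < d i)
    (hsym : ∀ i j, (d i : ℤ) * C i j = (d j : ℤ) * C j i)
    (bar : QF ≃+* QF) (hbarq : bar RatFunc.X = RatFunc.X⁻¹)
    (hbarQ : ∀ c : ℚ, bar (algebraMap ℚ QF c) = algebraMap ℚ QF c) :
    ∃ D : BosonZAlg C d ≃+ BosonZAlg C d,
      (∀ a b : BosonZAlg C d, D (a * b) = D b * D a) ∧
      (∀ (c : QF) (x : BosonZAlg C d), D (c • x) = bar c • D x) ∧
      (∀ (i : I) (n : ℤ), D (bzE C d i n) = bzE C d i (n + 1)) := by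
  have hbar' : bar.symm RatFunc.X = RatFunc.X⁻¹ := by
    have h : bar (RatFunc.X⁻¹) = RatFunc.X := by rw [map_inv₀, hbarq, inv_inv]
    exact bar.symm_apply_eq.mpr h.symm
  refine ⟨{ toFun := fun x => MulOpposite.unop (Stmt14Aux.FF C d hC2 hd bar hbarq 1 x),
            invFun := fun x => MulOpposite.unop (Stmt14Aux.FF C d hC2 hd bar.symm hbar' (-1) x),
            left_inv := fun x => Stmt14Aux.FF_comp_id C d hC2 hd bar bar.symm hbarq hbar'
              1 (-1) (fun c => bar.symm_apply_apply c) (by norm_num) x,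
            right_inv := fun x => Stmt14Aux.FF_comp_id C d hC2 hd bar.symm bar hbar' hbarq
              (-1) 1 (fun c => bar.apply_symm_apply c) (by norm_num) x,
            map_add' := fun a b => by simp },
          ?_, ?_, ?_⟩
  · intro a b
    show MulOpposite.unop (Stmt14Aux.FF C d hC2 hd bar hbarq 1 (a * b)) = _
    rw [map_mul, MulOpposite.unop_mul]
    rfl
  · intro c x
    show MulOpposite.unop (Stmt14Aux.FF C d hC2 hd bar hbarq 1 (c • x)) = _
    rw [Stmt14Aux.FF_smul, MulOpposite.unop_smul]
    rfl
  · intro i n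
    show MulOpposite.unop (Stmt14Aux.FF C d hC2 hd bar hbarq 1 (bzE C d i n)) = _
    rw [Stmt14Aux.FF_bzE, MulOpposite.unop_op]

end
end
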